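/- arXiv:1204.4308 — 4 statements merged into one kernel-verified Lean document; each statement's English description precedes it below -/
import Mathlib

section
/- Let X and Y be Banach spaces and T : X → Y a bounded linear operator with adjoint T* : Y* → X*. Then (1/2)·χ_m(T*(B_{Y*})) ≤ cc_DP(T) ≤ 2·χ_m(T*(B_{Y*})). -/
/-!
For every `L ⊆ B_X`, both `χ₀(T(L))` and `χ₀(T*(B_{Y*})|_L)` are measures of non-compactness of
one bounded matrix `(x, ψ) ↦ ψ (T x)`, `x ∈ L`, `‖ψ‖ ≤ 1`: the first is that of its rows and the
second that of its columns, each in the supremum distance (for the rows this distance is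
`‖T x - T x'‖` by Hahn–Banach). For any bounded matrix the rows are at most twice as non-compact
as the columns: if the finitely many columns of `G` approximate every column within `β`, and the
finitely many rows of `N` approximate every row within `ε` on the finitely many coordinates in `G`
(such `N` exists by compactness of balls in `𝕜^G`), then every row is within `2β + ε` of a
row in `N`. Applied to the matrix and to its transpose, this compares the two quantities for
each `L`, hence their suprema.
-/

open Filter Metric Set NormedSpace
open scoped Topology

noncomputable section

/-- The non-symmetrized Hausdorff distance `d̂(A,B) = sup_{a ∈ A} dist(a, B)`,
formulated with an abstract distance function `d`. -/
def hdD {Z : Type*} (d : Z → Z → ℝ) (A B : Set Z) : ℝ :=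
  ⨆ a : A, ⨅ b : B, d a b

/-- `χ₀(A) = inf { d̂(A,F) : F ⊆ A finite nonempty }`. -/
def chi0D {Z : Type*} (d : Z → Z → ℝ) (A : Set Z) : ℝ :=
  sInf {r | ∃ F : Set Z, F ⊆ A ∧ F.Finite ∧ F.Nonempty ∧ r = hdD d A F}

/-- A subset of a normed space is weakly compact if it is compact in the weak topology. -/
def IsWeaklyCompact (𝕜 : Type*) [RCLike 𝕜] {Z : Type*} [NormedAddCommGroup Z]
    [NormedSpace 𝕜 Z] (K : Set Z) : Prop :=
  IsCompact (toWeakSpace 𝕜 Z '' K)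

/-- `cc_DP(T) = sup { χ₀(T(L)) : L ⊆ B_X weakly compact }`. -/
def ccDP (𝕜 : Type*) [RCLike 𝕜] {X Y : Type*} [NormedAddCommGroup X] [NormedSpace 𝕜 X]
    [NormedAddCommGroup Y] [NormedSpace 𝕜 Y] (T : X →L[𝕜] Y) : ℝ :=
  sSup {r | ∃ L : Set X, L.Nonempty ∧ L ⊆ closedBall (0 : X) 1 ∧ IsWeaklyCompact 𝕜 L ∧
    r = chi0D dist (T '' L)}

/-- The measure of Mackey non-compactness of a bounded set `A ⊆ X*`:
`χ_m(A) = sup { χ₀(A|_L) : L ⊆ B_X weakly compact }`, where `A|_L ⊆ ℓ∞(L)`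
carries the supremum distance. -/
def chiMackey (𝕜 : Type*) [RCLike 𝕜] {X : Type*} [NormedAddCommGroup X] [NormedSpace 𝕜 X]
    (A : Set (StrongDual 𝕜 X)) : ℝ :=
  sSup {r | ∃ L : Set X, L ⊆ closedBall (0 : X) 1 ∧ IsWeaklyCompact 𝕜 L ∧
    r = chi0D (fun u v : ↥L → 𝕜 => ⨆ y : L, ‖u y - v y‖)
      ((fun φ : StrongDual 𝕜 X => fun y : L => φ (y : X)) '' A)}

/-- The image of the dual unit ball under the adjoint operator `T*`. -/
def adjointBallImage (𝕜 : Type*) [RCLike 𝕜] {X Y : Type*} [NormedAddCommGroup X]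
    [NormedSpace 𝕜 X] [NormedAddCommGroup Y] [NormedSpace 𝕜 Y] (T : X →L[𝕜] Y) :
    Set (StrongDual 𝕜 X) :=
  {φ | ∃ ψ : StrongDual 𝕜 Y, ‖ψ‖ ≤ 1 ∧ φ = ψ.comp T}

section Chi0

variable {W Z : Type*} {d : Z → Z → ℝ} {A F : Set Z} {c ε M : ℝ}

lemma hdD_nonneg (hd : ∀ a b, 0 ≤ d a b) (A B : Set Z) : 0 ≤ hdD d A B :=
  Real.iSup_nonneg fun _ => Real.iInf_nonneg fun _ => hd _ _

lemma chi0D_nonneg (hd : ∀ a b, 0 ≤ d a b) (A : Set Z) : 0 ≤ chi0D d A :=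
  Real.sInf_nonneg fun _ ⟨_, _, _, _, hr⟩ => hr ▸ hdD_nonneg hd _ _

lemma chi0D_empty (d : Z → Z → ℝ) : chi0D d ∅ = 0 := by
  rw [chi0D, ← Real.sInf_empty]
  congr 1
  ext r
  simp only [subset_empty_iff, mem_ofPred_eq, mem_empty_iff_false, iff_false]
  rintro ⟨F, rfl, -, hF, -⟩
  exact not_nonempty_empty hF

lemma chi0D_le_hdD (hd : ∀ a b, 0 ≤ d a b) (hFA : F ⊆ A) (hF : F.Finite) (hFne : F.Nonempty) :
    chi0D d A ≤ hdD d A F :=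
  csInf_le ⟨0, by rintro _ ⟨_, _, _, _, rfl⟩; exact hdD_nonneg hd _ _⟩ ⟨F, hFA, hF, hFne, rfl⟩

lemma chi0D_le_of_forall_exists_le (hd : ∀ a b, 0 ≤ d a b) (hFA : F ⊆ A) (hF : F.Finite)
    (hFne : F.Nonempty) (hc : 0 ≤ c) (h : ∀ a ∈ A, ∃ b ∈ F, d a b ≤ c) : chi0D d A ≤ c := by
  refine (chi0D_le_hdD hd hFA hF hFne).trans (Real.iSup_le (fun a => ?_) hc)
  obtain ⟨b, hb, hab⟩ := h a a.2
  exact ciInf_le_of_le ⟨0, by rintro _ ⟨_, rfl⟩; exact hd _ _⟩ ⟨b, hb⟩ hab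

lemma chi0D_le_of_forall_le (hd : ∀ a b, 0 ≤ d a b) (hc : 0 ≤ c)
    (h : ∀ a ∈ A, ∀ b ∈ A, d a b ≤ c) : chi0D d A ≤ c := by
  rcases A.eq_empty_or_nonempty with rfl | ⟨a₀, ha₀⟩
  · rwa [chi0D_empty]
  exact chi0D_le_of_forall_exists_le hd (singleton_subset_iff.2 ha₀) (finite_singleton a₀)
    (singleton_nonempty a₀) hc fun a ha => ⟨a₀, rfl, h a ha a₀ ha₀⟩

lemma exists_finite_forall_exists_lt_chi0D_add (hd : ∀ a b, 0 ≤ d a b) (hA : A.Nonempty)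
    (hM : ∀ a ∈ A, ∀ b ∈ A, d a b ≤ M) (hε : 0 < ε) :
    ∃ F ⊆ A, F.Finite ∧ ∀ a ∈ A, ∃ b ∈ F, d a b < chi0D d A + ε := by
  obtain ⟨a₀, ha₀⟩ := hA
  obtain ⟨_, ⟨F, hFA, hF, ⟨b₀, hb₀⟩, rfl⟩, hlt⟩ :=
    exists_lt_of_csInf_lt (s := {r | ∃ F ⊆ A, F.Finite ∧ F.Nonempty ∧ r = hdD d A F})
      ⟨_, {a₀}, singleton_subset_iff.2 ha₀, finite_singleton a₀, singleton_nonempty a₀, rfl⟩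
      (lt_add_of_pos_right (chi0D d A) hε)
  refine ⟨F, hFA, hF, fun a ha => ?_⟩
  have hbdd : BddAbove (range fun a : A => ⨅ b : F, d a b) := by
    refine ⟨M, ?_⟩
    rintro _ ⟨a', rfl⟩
    exact ciInf_le_of_le ⟨0, by rintro _ ⟨_, rfl⟩; exact hd _ _⟩ ⟨b₀, hb₀⟩
      (hM _ a'.2 _ (hFA hb₀))
  have : Nonempty F := ⟨⟨b₀, hb₀⟩⟩
  obtain ⟨b, hb⟩ := exists_lt_of_ciInf_lt ((le_ciSup hbdd ⟨a, ha⟩).trans_lt hlt)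
  exact ⟨b, b.2, hb⟩

lemma range_image_subtype (f : W → Z) (g : Z → ℝ) (B : Set W) :
    range (fun b : ↥(f '' B) => g b) = range (fun b : B => g (f b)) := by
  ext r; simp

lemma hdD_image (f : W → Z) (A B : Set W) :
    hdD d (f '' A) (f '' B) = hdD (fun a b => d (f a) (f b)) A B := by
  simp only [hdD, iSup, iInf, range_image_subtype]
  exact congrArg sSup (range_image_subtype f (fun z => sInf (range fun b : B => d z (f b))) A)

lemma chi0D_image (f : W → Z) (A : Set W) :
    chi0D d (f '' A) = chi0D (fun a b => d (f a) (f b)) A := by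
  simp only [chi0D]
  congr 1
  ext r
  have := @exists_subset_image_finite_and _ _ f A (fun F => F.Nonempty ∧ r = hdD d (f '' A) F)
  simp only [image_nonempty, hdD_image] at this
  simpa only [mem_ofPred_eq, and_assoc] using this

end Chi0

section Pairing

variable {ι κ E : Type*} [NormedAddCommGroup E] {p : ι → κ → E} {S : Set ι} {P : Set κ}
  {i j : ι} {M ε : ℝ}

def pairingDist (p : ι → κ → E) (P : Set κ) (i j : ι) : ℝ :=
  ⨆ k : P, ‖p i k - p j k‖

lemma pairingDist_nonneg : 0 ≤ pairingDist p P i j :=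
  Real.iSup_nonneg fun _ => norm_nonneg _

lemma norm_sub_le_pairingDist (hi : ∀ k ∈ P, ‖p i k‖ ≤ M) (hj : ∀ k ∈ P, ‖p j k‖ ≤ M)
    {k : κ} (hk : k ∈ P) : ‖p i k - p j k‖ ≤ pairingDist p P i j := by
  refine le_ciSup (f := fun l : P => ‖p i l - p j l‖) ⟨M + M, ?_⟩ ⟨k, hk⟩
  rintro _ ⟨l, rfl⟩
  exact (norm_sub_le _ _).trans (add_le_add (hi l l.2) (hj l l.2))

lemma pairingDist_le_two_mul (hM : 0 ≤ M) (hi : ∀ k ∈ P, ‖p i k‖ ≤ M)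
    (hj : ∀ k ∈ P, ‖p j k‖ ≤ M) : pairingDist p P i j ≤ 2 * M :=
  Real.iSup_le (fun k => (norm_sub_le _ _).trans (by linarith [hi k k.2, hj k k.2]))
    (by positivity)

lemma chi0D_pairingDist_le_two_mul (hM0 : 0 ≤ M) (hM : ∀ i ∈ S, ∀ k ∈ P, ‖p i k‖ ≤ M) :
    chi0D (pairingDist p P) S ≤ 2 * M :=
  chi0D_le_of_forall_le (fun _ _ => pairingDist_nonneg) (by positivity) fun i hi j hj =>
    pairingDist_le_two_mul hM0 (hM i hi) (hM j hj)

lemma exists_finite_forall_exists_norm_sub_le [ProperSpace E] {G : Set κ} (hG : G.Finite)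
    (hM : ∀ i ∈ S, ∀ k ∈ G, ‖p i k‖ ≤ M) (hε : 0 < ε) :
    ∃ N ⊆ S, N.Finite ∧ ∀ i ∈ S, ∃ e ∈ N, ∀ k ∈ G, ‖p i k - p e k‖ ≤ ε := by
  have := hG.fintype
  set Φ : ι → G → E := fun i k => p i k
  have hball : Φ '' S ⊆ closedBall 0 (max M 0) := by
    rintro _ ⟨i, hi, rfl⟩
    exact mem_closedBall_zero_iff.2 <| (pi_norm_le_iff_of_nonneg (le_max_right M 0)).2
      fun k => (hM i hi k k.2).trans (le_max_left M 0)
  obtain ⟨N, hNS, hN, hcover⟩ := exists_subset_image_finite_and.1 <|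
    finite_approx_of_totallyBounded ((isCompact_closedBall _ _).totallyBounded.subset hball) ε hε
  refine ⟨N, hNS, hN, fun i hi => ?_⟩
  obtain ⟨_, ⟨e, he, rfl⟩, hie⟩ := mem_iUnion₂.1 (hcover (mem_image_of_mem Φ hi))
  refine ⟨e, he, fun k hk => ?_⟩
  rw [← dist_eq_norm]
  exact (dist_le_pi_dist (Φ i) (Φ e) ⟨k, hk⟩).trans (mem_ball.1 hie).le

theorem chi0D_pairingDist_le_two_mul_chi0D_flip [ProperSpace E]
    (hM : ∀ i ∈ S, ∀ k ∈ P, ‖p i k‖ ≤ M) :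
    chi0D (pairingDist p P) S ≤ 2 * chi0D (pairingDist (flip p) S) P := by
  set β := chi0D (pairingDist (flip p) S) P
  have hβ : 0 ≤ β := chi0D_nonneg (fun _ _ => pairingDist_nonneg) P
  rcases S.eq_empty_or_nonempty with rfl | ⟨i₀, hi₀⟩
  · rw [chi0D_empty]; positivity
  rcases P.eq_empty_or_nonempty with rfl | ⟨k₀, hk₀⟩
  · refine (chi0D_le_of_forall_le (fun _ _ => pairingDist_nonneg) le_rfl fun i _ j _ => ?_).trans
      (by positivity)
    simp [pairingDist]
  have hM0 : 0 ≤ M := (norm_nonneg _).trans (hM i₀ hi₀ k₀ hk₀)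
  have hMflip : ∀ k ∈ P, ∀ i ∈ S, ‖flip p k i‖ ≤ M := fun k hk i hi => hM i hi k hk
  refine le_of_forall_pos_le_add fun δ hδ => ?_
  obtain ⟨G, hGP, hG, hPG⟩ := exists_finite_forall_exists_lt_chi0D_add
    (fun _ _ => pairingDist_nonneg) ⟨k₀, hk₀⟩
    (fun k hk l hl => pairingDist_le_two_mul hM0 (hMflip k hk) (hMflip l hl))
    (div_pos hδ three_pos)
  obtain ⟨N, hNS, hN, hSN⟩ := exists_finite_forall_exists_norm_sub_le hG
    (fun i hi k hk => hM i hi k (hGP hk)) (div_pos hδ three_pos)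
  obtain ⟨e₀, he₀, -⟩ := hSN i₀ hi₀
  refine chi0D_le_of_forall_exists_le (fun _ _ => pairingDist_nonneg) hNS hN ⟨e₀, he₀⟩
    (by positivity) fun i hi => ?_
  obtain ⟨e, he, hie⟩ := hSN i hi
  refine ⟨e, he, Real.iSup_le (fun k => ?_) (by positivity)⟩
  obtain ⟨g, hg, hkg⟩ := hPG k k.2
  have hcol : ∀ l ∈ S, ‖p l k - p l g‖ < β + δ / 3 := fun l hl =>
    (norm_sub_le_pairingDist (hMflip k k.2) (hMflip g (hGP hg)) hl).trans_lt hkg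
  calc ‖p i k - p e k‖ ≤ ‖p i k - p i g‖ + ‖p i g - p e g‖ + ‖p e g - p e k‖ := by
        simpa only [dist_eq_norm] using dist_triangle4 (p i k) (p i g) (p e g) (p e k)
    _ ≤ 2 * β + δ := by
        rw [norm_sub_rev (p e g)]
        linarith [hcol i hi, hcol e (hNS he), hie g hg]

end Pairing

section Operator

variable {𝕜 : Type*} [RCLike 𝕜] {X Y : Type*} [NormedAddCommGroup X] [NormedSpace 𝕜 X]
  [NormedAddCommGroup Y] [NormedSpace 𝕜 Y] (T : X →L[𝕜] Y) {L : Set X}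

lemma iSup_closedBall_dual_norm_apply (y : Y) :
    ⨆ ψ : closedBall (0 : StrongDual 𝕜 Y) 1, ‖(ψ : StrongDual 𝕜 Y) y‖ = ‖y‖ := by
  have hle : ∀ ψ : closedBall (0 : StrongDual 𝕜 Y) 1, ‖(ψ : StrongDual 𝕜 Y) y‖ ≤ ‖y‖ :=
    fun ψ => (ψ.1.le_opNorm y).trans
      (mul_le_of_le_one_left (norm_nonneg y) (mem_closedBall_zero_iff.1 ψ.2))
  obtain ⟨g, hg, hgy⟩ := exists_dual_vector'' 𝕜 y
  refine le_antisymm (Real.iSup_le hle (norm_nonneg y)) ?_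
  calc ‖y‖ = ‖g y‖ := by rw [hgy, RCLike.norm_ofReal, abs_norm]
    _ ≤ _ := le_ciSup (f := fun ψ : closedBall (0 : StrongDual 𝕜 Y) 1 => ‖(ψ : StrongDual 𝕜 Y) y‖)
        ⟨‖y‖, by rintro _ ⟨ψ, rfl⟩; exact hle ψ⟩ ⟨g, mem_closedBall_zero_iff.2 hg⟩

lemma norm_apply_apply_le {x : X} (hx : x ∈ closedBall 0 1) {ψ : StrongDual 𝕜 Y}
    (hψ : ψ ∈ closedBall 0 1) : ‖ψ (T x)‖ ≤ ‖T‖ := by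
  rw [mem_closedBall_zero_iff] at hx hψ
  calc ‖ψ (T x)‖ ≤ ‖ψ‖ * (‖T‖ * ‖x‖) := ψ.le_opNorm_of_le (T.le_opNorm x)
    _ ≤ 1 * (‖T‖ * 1) := by gcongr
    _ = ‖T‖ := by ring

lemma adjointBallImage_eq_image :
    adjointBallImage 𝕜 T = (fun ψ : StrongDual 𝕜 Y => ψ.comp T) '' closedBall 0 1 := by
  ext φ
  simp only [adjointBallImage, mem_ofPred_eq, mem_image, mem_closedBall_zero_iff]
  exact exists_congr fun ψ => and_congr_right' eq_comm

/-- `χ₀(T*(B_{Y*})|_L)`. -/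
def chi0Restrict (L : Set X) : ℝ :=
  chi0D (fun u v : ↥L → 𝕜 => ⨆ y : L, ‖u y - v y‖)
    ((fun φ : StrongDual 𝕜 X => fun y : L => φ (y : X)) '' adjointBallImage 𝕜 T)

lemma chi0D_image_eq_chi0D_pairingDist (L : Set X) :
    chi0D dist (T '' L) =
      chi0D (pairingDist (fun x (ψ : StrongDual 𝕜 Y) => ψ (T x)) (closedBall 0 1)) L := by
  rw [chi0D_image]
  congr 1
  funext x x'
  rw [dist_eq_norm, ← iSup_closedBall_dual_norm_apply (𝕜 := 𝕜), pairingDist]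
  simp only [map_sub]

lemma chi0Restrict_eq_chi0D_pairingDist (L : Set X) :
    chi0Restrict T L =
      chi0D (pairingDist (flip fun x (ψ : StrongDual 𝕜 Y) => ψ (T x)) L) (closedBall 0 1) := by
  rw [chi0Restrict, adjointBallImage_eq_image, image_image, chi0D_image]
  rfl

lemma chi0D_image_le_two_mul_chi0Restrict (hL : L ⊆ closedBall 0 1) :
    chi0D dist (T '' L) ≤ 2 * chi0Restrict T L := by
  rw [chi0D_image_eq_chi0D_pairingDist, chi0Restrict_eq_chi0D_pairingDist]
  exact chi0D_pairingDist_le_two_mul_chi0D_flip fun x hx ψ hψ => norm_apply_apply_le T (hL hx) hψ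

lemma chi0Restrict_le_two_mul_chi0D_image (hL : L ⊆ closedBall 0 1) :
    chi0Restrict T L ≤ 2 * chi0D dist (T '' L) := by
  rw [chi0D_image_eq_chi0D_pairingDist, chi0Restrict_eq_chi0D_pairingDist]
  exact chi0D_pairingDist_le_two_mul_chi0D_flip fun ψ hψ x hx => norm_apply_apply_le T (hL hx) hψ

lemma chi0D_image_le_ccDP (hL : L ⊆ closedBall 0 1) (hw : IsWeaklyCompact 𝕜 L) :
    chi0D dist (T '' L) ≤ ccDP 𝕜 T := by
  have hbdd : BddAbove {r | ∃ L : Set X, L.Nonempty ∧ L ⊆ closedBall (0 : X) 1 ∧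
      IsWeaklyCompact 𝕜 L ∧ r = chi0D dist (T '' L)} := by
    refine ⟨2 * ‖T‖, ?_⟩
    rintro _ ⟨L, -, hL, -, rfl⟩
    rw [chi0D_image_eq_chi0D_pairingDist]
    exact chi0D_pairingDist_le_two_mul (norm_nonneg T)
      fun x hx ψ hψ => norm_apply_apply_le T (hL hx) hψ
  rcases L.eq_empty_or_nonempty with rfl | hne
  · rw [image_empty, chi0D_empty]
    refine le_csSup_of_le hbdd ⟨{0}, singleton_nonempty 0, by simp, ?_, rfl⟩
      (chi0D_nonneg (fun _ _ => dist_nonneg) _)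
    simp [IsWeaklyCompact]
  · exact le_csSup hbdd ⟨L, hne, hL, hw, rfl⟩

lemma chi0Restrict_le_chiMackey (hL : L ⊆ closedBall 0 1) (hw : IsWeaklyCompact 𝕜 L) :
    chi0Restrict T L ≤ chiMackey 𝕜 (adjointBallImage 𝕜 T) := by
  refine le_csSup ⟨2 * ‖T‖, ?_⟩ ⟨L, hL, hw, rfl⟩
  rintro _ ⟨L, hL, -, rfl⟩
  rw [← chi0Restrict, chi0Restrict_eq_chi0D_pairingDist]
  exact chi0D_pairingDist_le_two_mul (norm_nonneg T)
    fun ψ hψ x hx => norm_apply_apply_le T (hL hx) hψ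

end Operator

theorem ccDP_equiv_chiMackey_adjoint_general
    {𝕜 : Type*} [RCLike 𝕜] {X Y : Type*}
    [NormedAddCommGroup X] [NormedSpace 𝕜 X]
    [NormedAddCommGroup Y] [NormedSpace 𝕜 Y]
    (T : X →L[𝕜] Y) :
    (1 / 2) * chiMackey 𝕜 (adjointBallImage 𝕜 T) ≤ ccDP 𝕜 T ∧
      ccDP 𝕜 T ≤ 2 * chiMackey 𝕜 (adjointBallImage 𝕜 T) := by
  constructor
  · suffices chiMackey 𝕜 (adjointBallImage 𝕜 T) ≤ 2 * ccDP 𝕜 T by linarith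
    refine csSup_le ⟨_, ∅, empty_subset _, by simp [IsWeaklyCompact], rfl⟩ ?_
    rintro _ ⟨L, hL, hw, rfl⟩
    calc chi0Restrict T L ≤ 2 * chi0D dist (T '' L) := chi0Restrict_le_two_mul_chi0D_image T hL
      _ ≤ 2 * ccDP 𝕜 T := by gcongr; exact chi0D_image_le_ccDP T hL hw
  · refine csSup_le ⟨_, {0}, singleton_nonempty 0, by simp, by simp [IsWeaklyCompact], rfl⟩ ?_
    rintro _ ⟨L, -, hL, hw, rfl⟩
    calc chi0D dist (T '' L) ≤ 2 * chi0Restrict T L := chi0D_image_le_two_mul_chi0Restrict T hL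
      _ ≤ 2 * chiMackey 𝕜 (adjointBallImage 𝕜 T) := by
        gcongr; exact chi0Restrict_le_chiMackey T hL hw

/-- Quantitative version of Grothendieck's lemma: for any operator `T : X → Y`
between Banach spaces, `(1/2)·χ_m(T*(B_{Y*})) ≤ cc_DP(T) ≤ 2·χ_m(T*(B_{Y*}))`. -/
theorem ccDP_equiv_chiMackey_adjoint
    {𝕜 : Type*} [RCLike 𝕜] {X Y : Type*}
    [NormedAddCommGroup X] [NormedSpace 𝕜 X] [CompleteSpace X]
    [NormedAddCommGroup Y] [NormedSpace 𝕜 Y] [CompleteSpace Y]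
    (T : X →L[𝕜] Y) :
    (1 / 2) * chiMackey 𝕜 (adjointBallImage 𝕜 T) ≤ ccDP 𝕜 T ∧
      ccDP 𝕜 T ≤ 2 * chiMackey 𝕜 (adjointBallImage 𝕜 T) :=
  ccDP_equiv_chiMackey_adjoint_general T
end
end

section
/- Let Ω be a Hausdorff locally compact space and A ⊆ M(Ω) a nonempty bounded set of finite complex Radon measures. Then sup{ limsup_{k→∞} sup_{μ∈A} |μ(U_k)| : (U_k) is a sequence of pairwise disjoint open subsets of Ω } ≤ sup{ limsup_{k→∞} sup_{μ∈A} |∫ f_k dμ| : (f_k) is a weakly null sequence in the closed unit ball of C₀(Ω) }. -/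
/-!
Let `(U_k)` be pairwise disjoint open sets and `ε > 0`. For each `k` choose `μ_k ∈ A` almost
attaining `sup_{μ ∈ A} ‖μ(U_k)‖`, a compact `K_k ⊆ U_k` with `|μ_k|(U_k \ K_k) < ε` (inner
regularity), and an Urysohn function `f_k ∈ C₀(Ω)` with `1_{K_k} ≤ f_k ≤ 1_{U_k}`. Then
`‖∫ f_k dμ_k - μ_k(U_k)‖ ≤ 2 |μ_k|(U_k \ K_k)`, because the variation `|μ|` (which agrees with
Mathlib's `VectorMeasure.variation`) dominates the total variations of `re μ` and `im μ`; so
`sup_μ ‖μ(U_k)‖ ≤ sup_μ ‖∫ f_k dμ‖ + 3ε` for every `k`. The `f_k` have disjoint supports, so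
`‖∑_{k ∈ S} c_k f_k‖ ≤ 1` for unimodular `c_k`; testing a functional `φ` on such sums gives
`∑_k ‖φ(f_k)‖ ≤ ‖φ‖`, hence `(f_k)` is weakly null.
-/

open Filter Metric Set MeasureTheory
open scoped ZeroAtInfty Topology
open scoped Function

noncomputable section

/-- The total variation `|μ|(H)` of a vector measure `μ` on a set `H`:
the supremum of `∑ ‖μ(D_i)‖` over finite disjoint families of measurable
subsets of `H`. -/
def variation {α : Type*} [MeasurableSpace α] {E : Type*} [NormedAddCommGroup E]
    (μ : VectorMeasure α E) (H : Set α) : ℝ :=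
  sSup {r | ∃ (n : ℕ) (D : Fin n → Set α), (∀ i, MeasurableSet (D i)) ∧
    Pairwise (Disjoint on D) ∧ (∀ i, D i ⊆ H) ∧ r = ∑ i, ‖μ (D i)‖}

/-- A vector measure on a topological measurable space is Radon if it is
inner regular by compact sets and outer regular by open sets, in variation. -/
def IsRadonVM {Ω : Type*} [TopologicalSpace Ω] [MeasurableSpace Ω] {E : Type*}
    [NormedAddCommGroup E] (μ : VectorMeasure Ω E) : Prop :=
  ∀ A : Set Ω, MeasurableSet A → ∀ ε > 0,
    (∃ K, K ⊆ A ∧ IsCompact K ∧ variation μ (A \ K) < ε) ∧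
    (∃ U, A ⊆ U ∧ IsOpen U ∧ variation μ (U \ A) < ε)

/-- The integral `∫ f ds` of a (bounded continuous) function against a signed
measure, via the Jordan decomposition. -/
def signedPairing {Ω : Type*} [MeasurableSpace Ω] (s : SignedMeasure Ω) (f : Ω → ℂ) : ℂ :=
  ∫ x, f x ∂s.toJordanDecomposition.posPart - ∫ x, f x ∂s.toJordanDecomposition.negPart

/-- The integral `∫ f dμ` of a function against a complex measure `μ`,
via real and imaginary parts. -/
def complexPairing {Ω : Type*} [MeasurableSpace Ω] (μ : ComplexMeasure Ω) (f : Ω → ℂ) : ℂ :=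
  signedPairing (ComplexMeasure.re μ) f + Complex.I * signedPairing (ComplexMeasure.im μ) f

open Function

section Variation

variable {Ω : Type*} [MeasurableSpace Ω]

lemma sum_norm_le_variation_real {E : Type*} [NormedAddCommGroup E] (μ : VectorMeasure Ω E)
    [IsFiniteMeasure μ.variation] {n : ℕ} {D : Fin n → Set Ω} (hD : ∀ i, MeasurableSet (D i))
    (hdisj : Pairwise (Disjoint on D)) {H : Set Ω} (hDH : ∀ i, D i ⊆ H) :
    ∑ i, ‖μ (D i)‖ ≤ μ.variation.real H :=
  calc ∑ i, ‖μ (D i)‖ ≤ ∑ i, μ.variation.real (D i) :=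
        Finset.sum_le_sum fun i _ => VectorMeasure.norm_measure_le_variation
    _ = μ.variation.real (⋃ i, D i) := (measureReal_iUnion_fintype hdisj hD).symm
    _ ≤ μ.variation.real H := measureReal_mono (iUnion_subset hDH)

theorem variation_eq_variation_real {E : Type*} [NormedAddCommGroup E] (μ : VectorMeasure Ω E)
    [IsFiniteMeasure μ.variation] {H : Set Ω} (hH : MeasurableSet H) :
    variation μ H = μ.variation.real H := by
  set S := {r | ∃ (n : ℕ) (D : Fin n → Set Ω), (∀ i, MeasurableSet (D i)) ∧
      Pairwise (Disjoint on D) ∧ (∀ i, D i ⊆ H) ∧ r = ∑ i, ‖μ (D i)‖}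
  have hub : μ.variation.real H ∈ upperBounds S := by
    rintro _ ⟨n, D, hD, hdisj, hDH, rfl⟩
    exact sum_norm_le_variation_real μ hD hdisj hDH
  have h0 : (0 : ℝ) ∈ S := ⟨0, finZeroElim, finZeroElim, finZeroElim, finZeroElim, by simp⟩
  refine le_antisymm (csSup_le ⟨0, h0⟩ hub) (ENNReal.toReal_le_of_le_ofReal
    (le_csSup ⟨_, hub⟩ h0) (le_of_forall_lt fun c hc => ?_))
  obtain ⟨P, hPH, hPdisj, hPm, hlt⟩ := μ.exists_lt_sum_of_lt_variation hH hc
  set e := P.equivFin.symm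
  have hmem : ∑ p ∈ P, ‖μ p‖ ∈ S := by
    refine ⟨P.card, fun i => e i, fun i => hPm _ (e i).2, fun i j hij => ?_,
      fun i => hPH _ (e i).2, ?_⟩
    · exact hPdisj (e i).2 (e j).2 (Subtype.coe_injective.ne (e.injective.ne hij))
    · rw [← Finset.sum_coe_sort P, ← e.sum_comp]
  calc c < ∑ p ∈ P, ‖μ p‖ₑ := hlt
    _ = ENNReal.ofReal (∑ p ∈ P, ‖μ p‖) := by
        rw [ENNReal.ofReal_sum_of_nonneg fun p _ => norm_nonneg _]
        simp only [ofReal_norm]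
    _ ≤ ENNReal.ofReal (sSup S) := ENNReal.ofReal_le_ofReal (le_csSup ⟨_, hub⟩ hmem)

lemma SignedMeasure.totalVariation_le_variation_of_forall_norm_le {E : Type*}
    [NormedAddCommGroup E] (s : SignedMeasure Ω) (μ : VectorMeasure Ω E)
    (h : ∀ E, MeasurableSet E → ‖s E‖ ≤ ‖μ E‖) : s.totalVariation ≤ μ.variation := by
  rw [s.totalVariation_eq_variation]
  exact VectorMeasure.variation_le_of_forall_enorm_le fun E hE =>
    (enorm_le_iff_norm_le.2 (h E hE)).trans (VectorMeasure.enorm_measure_le_variation μ E)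

lemma Complex.enorm_le_enorm_re_add_enorm_im (z : ℂ) : ‖z‖ₑ ≤ ‖z.re‖ₑ + ‖z.im‖ₑ := by
  simp only [← ofReal_norm, Real.norm_eq_abs]
  rw [← ENNReal.ofReal_add (abs_nonneg _) (abs_nonneg _)]
  exact ENNReal.ofReal_le_ofReal (Complex.norm_le_abs_re_add_abs_im z)

instance (μ : ComplexMeasure Ω) : IsFiniteMeasure μ.variation :=
  isFiniteMeasure_of_le ((ComplexMeasure.re μ).totalVariation
    + (ComplexMeasure.im μ).totalVariation) (VectorMeasure.variation_le_of_forall_enorm_le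
      fun E _ => (Complex.enorm_le_enorm_re_add_enorm_im (μ E)).trans
        (add_le_add ((ComplexMeasure.re μ).enorm_le_totalVariation E)
          ((ComplexMeasure.im μ).enorm_le_totalVariation E)))

lemma ComplexMeasure.totalVariation_re_le_variation (μ : ComplexMeasure Ω) :
    (ComplexMeasure.re μ).totalVariation ≤ μ.variation :=
  SignedMeasure.totalVariation_le_variation_of_forall_norm_le _ μ fun E _ =>
    Complex.abs_re_le_norm (μ E)

lemma ComplexMeasure.totalVariation_im_le_variation (μ : ComplexMeasure Ω) :
    (ComplexMeasure.im μ).totalVariation ≤ μ.variation :=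
  SignedMeasure.totalVariation_le_variation_of_forall_norm_le _ μ fun E _ =>
    Complex.abs_im_le_norm (μ E)

end Variation

section Pairing

variable {Ω : Type*} [MeasurableSpace Ω]

lemma norm_integral_le_measureReal_of_norm_le_indicator {G : Type*} [NormedAddCommGroup G]
    [NormedSpace ℝ G] (ν : Measure Ω) [IsFiniteMeasure ν] {g : Ω → G} {H : Set Ω}
    (hH : MeasurableSet H) (hg : ∀ x, ‖g x‖ ≤ H.indicator 1 x) : ‖∫ x, g x ∂ν‖ ≤ ν.real H :=
  (norm_integral_le_of_norm_le ((integrable_const 1).indicator hH) (ae_of_all _ hg)).trans_eq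
    (integral_indicator_one hH)

lemma norm_signedPairing_le (s : SignedMeasure Ω) {g : Ω → ℂ} {H : Set Ω}
    (hH : MeasurableSet H) (hg : ∀ x, ‖g x‖ ≤ H.indicator 1 x) :
    ‖signedPairing s g‖ ≤ s.totalVariation.real H := by
  rw [SignedMeasure.totalVariation, measureReal_add_apply]
  exact (norm_sub_le _ _).trans (add_le_add
    (norm_integral_le_measureReal_of_norm_le_indicator _ hH hg)
    (norm_integral_le_measureReal_of_norm_le_indicator _ hH hg))

lemma norm_complexPairing_le (μ : ComplexMeasure Ω) {g : Ω → ℂ} {H : Set Ω}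
    (hH : MeasurableSet H) (hg : ∀ x, ‖g x‖ ≤ H.indicator 1 x) :
    ‖complexPairing μ g‖ ≤ 2 * variation μ H := by
  rw [variation_eq_variation_real μ hH, two_mul]
  calc ‖complexPairing μ g‖
      ≤ ‖signedPairing (ComplexMeasure.re μ) g‖ + ‖signedPairing (ComplexMeasure.im μ) g‖ := by
        refine (norm_add_le _ _).trans_eq ?_
        rw [norm_mul, Complex.norm_I, one_mul]
    _ ≤ (ComplexMeasure.re μ).totalVariation.real H
        + (ComplexMeasure.im μ).totalVariation.real H :=
        add_le_add (norm_signedPairing_le _ hH hg) (norm_signedPairing_le _ hH hg)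
    _ ≤ μ.variation.real H + μ.variation.real H := add_le_add
        (ENNReal.toReal_mono (measure_ne_top _ _)
          (ComplexMeasure.totalVariation_re_le_variation μ H))
        (ENNReal.toReal_mono (measure_ne_top _ _)
          (ComplexMeasure.totalVariation_im_le_variation μ H))

lemma signedPairing_sub (s : SignedMeasure Ω) {f g : Ω → ℂ}
    (hf : ∀ (ν : Measure Ω) [IsFiniteMeasure ν], Integrable f ν)
    (hg : ∀ (ν : Measure Ω) [IsFiniteMeasure ν], Integrable g ν) :
    signedPairing s (f - g) = signedPairing s f - signedPairing s g := by
  simp only [signedPairing, Pi.sub_apply]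
  rw [integral_sub (hf _) (hg _), integral_sub (hf _) (hg _)]
  ring

lemma complexPairing_sub (μ : ComplexMeasure Ω) {f g : Ω → ℂ}
    (hf : ∀ (ν : Measure Ω) [IsFiniteMeasure ν], Integrable f ν)
    (hg : ∀ (ν : Measure Ω) [IsFiniteMeasure ν], Integrable g ν) :
    complexPairing μ (f - g) = complexPairing μ f - complexPairing μ g := by
  simp only [complexPairing, signedPairing_sub _ hf hg]
  ring

lemma signedPairing_indicator_one (s : SignedMeasure Ω) {E : Set Ω} (hE : MeasurableSet E) :
    signedPairing s (E.indicator 1) = s E := by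
  simp only [signedPairing, Pi.one_def, integral_indicator_const _ hE,
    s.apply_eq_posPart_real_sub_negPart_real hE]
  simp

lemma complexPairing_indicator_one (μ : ComplexMeasure Ω) {E : Set Ω} (hE : MeasurableSet E) :
    complexPairing μ (E.indicator 1) = μ E := by
  rw [complexPairing, signedPairing_indicator_one _ hE, signedPairing_indicator_one _ hE, mul_comm]
  exact Complex.re_add_im (μ E)

end Pairing

namespace ZeroAtInftyContinuousMap

variable {Ω 𝕜 : Type*} [TopologicalSpace Ω] [RCLike 𝕜]

lemma norm_apply_le {β : Type*} [SeminormedAddCommGroup β] (f : C₀(Ω, β)) (x : Ω) :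
    ‖f x‖ ≤ ‖f‖ :=
  (f.toBCF.norm_coe_le_norm x).trans_eq norm_toBCF_eq_norm

lemma norm_le {β : Type*} [SeminormedAddCommGroup β] {f : C₀(Ω, β)} {C : ℝ} (hC : 0 ≤ C) :
    ‖f‖ ≤ C ↔ ∀ x, ‖f x‖ ≤ C := by
  rw [← norm_toBCF_eq_norm]
  exact BoundedContinuousFunction.norm_le hC

theorem exists_norm_le_one_norm_sub_indicator_le [RegularSpace Ω] [LocallyCompactSpace Ω]
    {K U : Set Ω} (hK : IsCompact K) (hU : IsOpen U) (hKU : K ⊆ U) :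
    ∃ f : C₀(Ω, 𝕜), ‖f‖ ≤ 1 ∧ ∀ x, ‖f x - U.indicator 1 x‖ ≤ (U \ K).indicator 1 x := by
  obtain ⟨f, hfK, hfU, hf, hf01⟩ := exists_continuous_one_zero_of_isCompact hK
    hU.isClosed_compl (disjoint_compl_right_iff_subset.2 hKU)
  let g : C₀(Ω, 𝕜) := ⟨⟨fun x => (f x : 𝕜), by fun_prop⟩,
    (hf.comp_left RCLike.ofReal_zero).is_zero_at_infty⟩
  have hg (x : Ω) : g x = (f x : 𝕜) := rfl
  refine ⟨g, (norm_le zero_le_one).2 fun x => ?_, fun x => ?_⟩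
  · rw [hg, RCLike.norm_ofReal, abs_of_nonneg (hf01 x).1]
    exact (hf01 x).2
  · by_cases hxK : x ∈ K
    · simp [hg, hKU hxK, hxK, hfK hxK]
    by_cases hxU : x ∈ U
    · rw [indicator_of_mem hxU, indicator_of_mem (show x ∈ U \ K from ⟨hxU, hxK⟩), hg,
        Pi.one_apply, Pi.one_apply, ← RCLike.ofReal_one, ← RCLike.ofReal_sub, RCLike.norm_ofReal,
        abs_le]
      constructor <;> linarith [(hf01 x).1, (hf01 x).2]
    · simp [hg, hxU, hfU hxU]

lemma norm_sum_le_one_of_pairwise_disjoint_support {ι : Type*} (S : Finset ι) {f : ι → C₀(Ω, 𝕜)}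
    (hf : ∀ k, ‖f k‖ ≤ 1) (hdisj : Pairwise (Disjoint on fun k => support (f k))) :
    ‖∑ k ∈ S, f k‖ ≤ 1 := by
  refine (norm_le zero_le_one).2 fun x => ?_
  have hsum : (∑ k ∈ S, f k) x = ∑ k ∈ S, f k x :=
    map_sum (⟨⟨fun g : C₀(Ω, 𝕜) => g x, rfl⟩, fun _ _ => rfl⟩ : C₀(Ω, 𝕜) →+ 𝕜) f S
  rw [hsum]
  by_cases hx : ∃ j ∈ S, x ∈ support (f j)
  · obtain ⟨j, hjS, hj⟩ := hx
    rw [Finset.sum_eq_single_of_mem j hjS fun k _ hkj =>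
      notMem_support.1 fun hk => disjoint_left.1 (hdisj hkj) hk hj]
    exact (norm_apply_le _ x).trans (hf j)
  · push Not at hx
    rw [Finset.sum_eq_zero fun k hk => notMem_support.1 (hx k hk), norm_zero]
    exact zero_le_one

theorem summable_norm_apply_of_pairwise_disjoint_support {ι : Type*} {f : ι → C₀(Ω, 𝕜)}
    (hf : ∀ k, ‖f k‖ ≤ 1) (hdisj : Pairwise (Disjoint on fun k => support (f k)))
    (φ : StrongDual 𝕜 C₀(Ω, 𝕜)) : Summable fun k => ‖φ (f k)‖ := by
  refine summable_of_sum_le (fun k => norm_nonneg _) (c := ‖φ‖) fun S => ?_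
  set c : ι → 𝕜 := fun k => starRingEnd 𝕜 (φ (f k)) / ‖φ (f k)‖
  have hc (k : ι) : ‖c k‖ ≤ 1 := by
    simp only [c, norm_div, RCLike.norm_conj, RCLike.norm_ofReal, abs_norm]
    exact div_self_le_one _
  have hcφ (k : ι) : c k * φ (f k) = ‖φ (f k)‖ := by
    rcases eq_or_ne (φ (f k)) 0 with h | h
    · simp [h]
    · rw [div_mul_eq_mul_div, RCLike.conj_mul, sq,
        mul_div_cancel_right₀ _ (RCLike.ofReal_ne_zero.2 (norm_ne_zero_iff.2 h))]
  have hnorm : ‖∑ k ∈ S, c k • f k‖ ≤ 1 :=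
    norm_sum_le_one_of_pairwise_disjoint_support S
      (fun k => (norm_smul_le _ _).trans (mul_le_one₀ (hc k) (norm_nonneg _) (hf k)))
      (hdisj.mono fun k l h =>
        h.mono (support_smul_subset_right _ _) (support_smul_subset_right _ _))
  calc ∑ k ∈ S, ‖φ (f k)‖ = ‖φ (∑ k ∈ S, c k • f k)‖ := by
        simp only [map_sum, map_smul, smul_eq_mul, hcφ]
        rw [← RCLike.ofReal_sum, RCLike.norm_ofReal,
          abs_of_nonneg (Finset.sum_nonneg fun k _ => norm_nonneg _)]
    _ ≤ ‖φ‖ * ‖∑ k ∈ S, c k • f k‖ := φ.le_opNorm _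
    _ ≤ ‖φ‖ := mul_le_of_le_one_right (norm_nonneg φ) hnorm

end ZeroAtInftyContinuousMap

lemma Filter.limsup_le_limsup_add_of_le_add {ι : Type*} {l : Filter ι} [l.NeBot] {u v : ι → ℝ}
    {c B : ℝ} (hu : ∀ k, 0 ≤ u k) (hv : ∀ k, 0 ≤ v k) (hvB : ∀ k, v k ≤ B)
    (h : ∀ k, u k ≤ v k + c) : limsup u l ≤ limsup v l + c := by
  rw [← limsup_add_const l v c (isBoundedUnder_of ⟨B, hvB⟩) (isCoboundedUnder_le_of_le l hv)]
  exact limsup_le_limsup (Eventually.of_forall h) (isCoboundedUnder_le_of_le l hu)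
    (isBoundedUnder_of ⟨B + c, fun k => by simpa using hvB k⟩)

section RadonMeasures

variable {Ω : Type*} [TopologicalSpace Ω] [MeasurableSpace Ω]

lemma norm_complexPairing_le_of_norm_le_one (μ : ComplexMeasure Ω) {f : C₀(Ω, ℂ)}
    (hf : ‖f‖ ≤ 1) : ‖complexPairing μ f‖ ≤ 2 * variation μ univ :=
  norm_complexPairing_le μ MeasurableSet.univ fun x => by
    simpa using (f.norm_apply_le x).trans hf

lemma norm_complexPairing_le_of_forall_variation_le {A : Set (ComplexMeasure Ω)} {C : ℝ}
    (hC : ∀ μ ∈ A, variation μ univ ≤ C) {f : C₀(Ω, ℂ)} (hf : ‖f‖ ≤ 1) (μ : A) :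
    ‖complexPairing μ f‖ ≤ 2 * C :=
  (norm_complexPairing_le_of_norm_le_one (μ : ComplexMeasure Ω) hf).trans (by
    gcongr
    exact hC μ μ.2)

lemma exists_iSup_norm_apply_le_iSup_norm_complexPairing_add [OpensMeasurableSpace Ω]
    [T2Space Ω] [LocallyCompactSpace Ω] {A : Set (ComplexMeasure Ω)} [Nonempty A]
    (hRadon : ∀ μ ∈ A, IsRadonVM μ) {C : ℝ} (hC : ∀ μ ∈ A, variation μ univ ≤ C)
    {U : Set Ω} (hU : IsOpen U) {ε : ℝ} (hε : 0 < ε) :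
    ∃ f : C₀(Ω, ℂ), ‖f‖ ≤ 1 ∧ support f ⊆ U ∧
      ⨆ μ : A, ‖(μ : ComplexMeasure Ω) U‖ ≤ (⨆ μ : A, ‖complexPairing μ f‖) + ε := by
  obtain ⟨⟨μ, hμA⟩, hμ⟩ := exists_lt_of_lt_ciSup
    (sub_lt_self (⨆ μ : A, ‖(μ : ComplexMeasure Ω) U‖) (half_pos hε))
  obtain ⟨K, hKU, hK, hKvar⟩ := (hRadon μ hμA U hU.measurableSet (ε / 4) (by positivity)).1
  obtain ⟨f, hf, hfU⟩ :=
    ZeroAtInftyContinuousMap.exists_norm_le_one_norm_sub_indicator_le (𝕜 := ℂ) hK hU hKU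
  have hsupp : support f ⊆ U := fun x hx => by_contra fun hxU => hx (by simpa [hxU] using hfU x)
  refine ⟨f, hf, hsupp, ?_⟩
  have hclose : ‖complexPairing μ f - μ U‖ ≤ 2 * variation μ (U \ K) := by
    rw [← complexPairing_indicator_one μ hU.measurableSet,
      ← complexPairing_sub (f := f) (g := U.indicator 1) μ (fun ν _ => f.toBCF.integrable ν)
        (fun ν _ => (integrable_const 1).indicator hU.measurableSet)]
    exact norm_complexPairing_le μ (hU.measurableSet.diff hK.measurableSet) hfU
  have hle : ‖complexPairing μ f‖ ≤ ⨆ μ : A, ‖complexPairing μ f‖ :=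
    le_ciSup (f := fun ν : A => ‖complexPairing ν f‖)
      ⟨2 * C, forall_mem_range.2 (norm_complexPairing_le_of_forall_variation_le hC hf)⟩ ⟨μ, hμA⟩
  have := norm_sub_norm_le (μ U) (complexPairing μ f)
  rw [norm_sub_rev] at this
  linarith

end RadonMeasures

/-- For a nonempty bounded set `A ⊆ M(Ω)` of finite complex Radon measures:
`sup { limsup_k sup_{μ∈A} |μ(U_k)| : (U_k) pairwise disjoint open } ≤
 sup { limsup_k sup_{μ∈A} |∫ f_k dμ| : (f_k) weakly null in B_{C₀(Ω)} }`. -/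
theorem sup_disjoint_open_le_sup_weaklyNull
    {Ω : Type*} [TopologicalSpace Ω] [T2Space Ω] [LocallyCompactSpace Ω]
    [MeasurableSpace Ω] [BorelSpace Ω]
    (A : Set (ComplexMeasure Ω)) (hA : A.Nonempty)
    (hRadon : ∀ μ ∈ A, IsRadonVM μ)
    (hbdd : ∃ C : ℝ, ∀ μ ∈ A, variation μ univ ≤ C) :
    sSup {r | ∃ U : ℕ → Set Ω, (∀ k, IsOpen (U k)) ∧ Pairwise (Disjoint on U) ∧
        r = Filter.limsup (fun k => ⨆ μ : A, ‖(μ : ComplexMeasure Ω) (U k)‖) atTop} ≤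
      sSup {r | ∃ f : ℕ → C₀(Ω, ℂ), (∀ k, f k ∈ closedBall (0 : C₀(Ω, ℂ)) 1) ∧
        (∀ φ : StrongDual ℂ C₀(Ω, ℂ), Tendsto (fun k => φ (f k)) atTop (nhds 0)) ∧
        r = Filter.limsup
          (fun k => ⨆ μ : A, ‖complexPairing (μ : ComplexMeasure Ω) (f k)‖) atTop} := by
  obtain ⟨C, hC⟩ := hbdd
  have := hA.to_subtype
  have hpair_le {f : C₀(Ω, ℂ)} (hf : ‖f‖ ≤ 1) : ⨆ μ : A, ‖complexPairing μ f‖ ≤ 2 * C :=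
    ciSup_le (norm_complexPairing_le_of_forall_variation_le hC hf)
  refine csSup_le ⟨_, fun _ => ∅, fun _ => isOpen_empty, fun _ _ _ => disjoint_empty _, rfl⟩ ?_
  rintro _ ⟨U, hU, hUdisj, rfl⟩
  refine le_of_forall_pos_le_add fun ε hε => ?_
  choose f hf hfU hle using fun k =>
    exists_iSup_norm_apply_le_iSup_norm_complexPairing_add hRadon hC (hU k) hε
  have hweak (φ : StrongDual ℂ C₀(Ω, ℂ)) : Tendsto (fun k => φ (f k)) atTop (𝓝 0) :=
    tendsto_zero_iff_norm_tendsto_zero.2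
      (ZeroAtInftyContinuousMap.summable_norm_apply_of_pairwise_disjoint_support hf
        (hUdisj.mono fun k l h => h.mono (hfU k) (hfU l)) φ).tendsto_atTop_zero
  refine (limsup_le_limsup_add_of_le_add (fun k => Real.iSup_nonneg fun _ => norm_nonneg _)
    (fun k => Real.iSup_nonneg fun _ => norm_nonneg _) (fun k => hpair_le (hf k)) hle).trans ?_
  gcongr
  refine le_csSup ⟨2 * C, ?_⟩ ⟨f, fun k => mem_closedBall_zero_iff.2 (hf k), hweak, rfl⟩
  rintro _ ⟨g, hg, -, rfl⟩
  exact limsup_le_of_le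
    (isCoboundedUnder_le_of_le atTop fun k => Real.iSup_nonneg fun _ => norm_nonneg _)
    (Eventually.of_forall fun k => hpair_le (mem_closedBall_zero_iff.1 (hg k)))
end
end

section
/- Let Δ = {−1,1}^ℕ be the Cantor space with the product probability measure μ (the countable power of (δ₁ + δ₋₁)/2). For n ∈ ℕ, equip C(Δ) with the equivalent norm ‖f‖_n = (1/n)‖f‖_∞ + ∫_Δ |f| dμ. Then for every weakly Cauchy sequence (f_k) in the sup-norm closed unit ball of C(Δ), ca computed in the norm ‖·‖_n satisfies ca((f_k)) ≤ 2/n; consequently, the identity operator Q_n from C(Δ) (sup norm) to Y_n = (C(Δ), ‖·‖_n) satisfies cc(Q_n) ≤ 2/n. -/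
open Filter Metric Set MeasureTheory NormedSpace
open scoped Topology

noncomputable section

/-- The Cantor space `Δ = {-1,1}^ℕ`. -/
abbrev CantorDelta : Type := ℕ → ({-1, 1} : Set ℝ)

instance : Finite ({-1, 1} : Set ℝ) :=
  ((Set.finite_singleton (1 : ℝ)).insert (-1)).to_subtype

/-- `μ` is the product of the uniform probability measures `(δ₁ + δ₋₁)/2` on the
coordinates iff it is a probability measure giving each cylinder determined by
finitely many coordinates the measure `2^{-number of coordinates}`. -/
def IsCoinProductMeasure (μ : Measure CantorDelta) : Prop :=
  IsProbabilityMeasure μ ∧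
    ∀ (s : Finset ℕ) (v : ℕ → ({-1, 1} : Set ℝ)),
      μ {x : CantorDelta | ∀ i ∈ s, x i = v i} = (2⁻¹ : ENNReal) ^ s.card

/-- `ca` of a sequence with respect to an abstract distance function `d`:
`ca((x_k)) = inf_n sup { d(x_k, x_l) : k, l ≥ n }`. -/
def caSeqD {Z : Type*} (d : Z → Z → ℝ) (x : ℕ → Z) : ℝ :=
  ⨅ n : ℕ, ⨆ p : {p : ℕ × ℕ // n ≤ p.1 ∧ n ≤ p.2}, d (x (p : ℕ × ℕ).1) (x (p : ℕ × ℕ).2)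

/-- The distance of the equivalent norm `‖f‖_n = (1/n)‖f‖_∞ + ∫ |f| dμ` on `C(Δ)`. -/
def distN (μ : Measure CantorDelta) (n : ℕ) (f g : C(CantorDelta, ℝ)) : ℝ :=
  (1 / (n : ℝ)) * ‖f - g‖ + ∫ x, |f x - g x| ∂μ

/-! Evaluations are continuous functionals, so a weakly Cauchy sequence in the unit ball of
`C(Δ)` is pointwise Cauchy and bounded by `1`; by dominated convergence it is then Cauchy in
`L¹(μ)` for any finite measure `μ`. In `‖·‖_n` only the sup-norm part of `‖f_k - f_l‖_n`, at
most `2/n`, survives in the oscillation `ca`. -/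

theorem caSeqD_le_of_le_add_of_tendsto {Z : Type*} {d : Z → Z → ℝ} {x : ℕ → Z} {c : ℝ}
    {e : ℕ × ℕ → ℝ} (hd : ∀ k l, 0 ≤ d (x k) (x l)) (hle : ∀ k l, d (x k) (x l) ≤ c + e (k, l))
    (he : Tendsto e atTop (𝓝 0)) : caSeqD d x ≤ c := by
  have htail_nonneg : ∀ N, 0 ≤ ⨆ p : {p : ℕ × ℕ // N ≤ p.1 ∧ N ≤ p.2}, d (x p.1.1) (x p.1.2) :=
    fun N => Real.iSup_nonneg fun p => hd _ _
  refine le_of_forall_pos_le_add fun ε hε => ?_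
  obtain ⟨⟨a, b⟩, hab⟩ := eventually_atTop.mp (he.eventually (ge_mem_nhds hε))
  let N := max a b
  have : Nonempty {p : ℕ × ℕ // N ≤ p.1 ∧ N ≤ p.2} := ⟨⟨(N, N), le_rfl, le_rfl⟩⟩
  calc caSeqD d x ≤ ⨆ p : {p : ℕ × ℕ // N ≤ p.1 ∧ N ≤ p.2}, d (x p.1.1) (x p.1.2) :=
        ciInf_le ⟨0, by rintro _ ⟨M, rfl⟩; exact htail_nonneg M⟩ N
    _ ≤ c + ε := ciSup_le fun ⟨⟨k, l⟩, hk, hl⟩ =>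
        (hle k l).trans (add_le_add_right
          (hab (k, l) ⟨(le_max_left a b).trans hk, (le_max_right a b).trans hl⟩) c)

theorem tendsto_integral_abs_sub_of_cauchySeq_apply {X : Type*} [MeasurableSpace X]
    (μ : Measure X) [IsFiniteMeasure μ] {F : ℕ → X → ℝ} {C : ℝ}
    (hF : ∀ k, AEStronglyMeasurable (F k) μ) (hC : ∀ k x, |F k x| ≤ C)
    (hcauchy : ∀ x, CauchySeq fun k => F k x) :
    Tendsto (fun p : ℕ × ℕ => ∫ x, |F p.1 x - F p.2 x| ∂μ) atTop (𝓝 0) := by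
  have hbound : ∀ k l x, ‖|F k x - F l x|‖ ≤ C + C := fun k l x => by
    rw [Real.norm_eq_abs, abs_abs]
    exact (abs_sub _ _).trans (add_le_add (hC k x) (hC l x))
  have hlim : ∀ x, Tendsto (fun p : ℕ × ℕ => |F p.1 x - F p.2 x|) atTop (𝓝 0) := fun x => by
    simpa only [Real.dist_eq] using cauchySeq_iff_tendsto_dist_atTop_0.mp (hcauchy x)
  simpa using tendsto_integral_filter_of_dominated_convergence (fun _ => C + C)
    (Eventually.of_forall fun (p : ℕ × ℕ) => ((hF p.1).sub (hF p.2)).norm)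
    (Eventually.of_forall fun (p : ℕ × ℕ) => ae_of_all _ (hbound p.1 p.2)) (integrable_const _)
    (ae_of_all _ hlim)

theorem ContinuousMap.cauchySeq_apply_of_forall_cauchySeq_dual {X : Type*} [TopologicalSpace X]
    [CompactSpace X] {f : ℕ → C(X, ℝ)}
    (hw : ∀ φ : StrongDual ℝ C(X, ℝ), CauchySeq fun k => φ (f k)) (x : X) :
    CauchySeq fun k => f k x :=
  hw (ContinuousMap.evalCLM ℝ x)

theorem caSeqD_distN_le (μ : Measure CantorDelta) [IsFiniteMeasure μ] (n : ℕ)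
    {f : ℕ → C(CantorDelta, ℝ)} (hf : ∀ k, f k ∈ closedBall (0 : C(CantorDelta, ℝ)) 1)
    (hw : ∀ φ : StrongDual ℝ C(CantorDelta, ℝ), CauchySeq fun k => φ (f k)) :
    caSeqD (distN μ n) f ≤ 2 / n := by
  have hf1 : ∀ k, ‖f k‖ ≤ 1 := fun k => mem_closedBall_zero_iff.mp (hf k)
  have hL1 := tendsto_integral_abs_sub_of_cauchySeq_apply μ
    (fun k => (f k).continuous.aestronglyMeasurable)
    (fun k x => ((f k).norm_coe_le_norm x).trans (hf1 k))
    (ContinuousMap.cauchySeq_apply_of_forall_cauchySeq_dual hw)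
  refine caSeqD_le_of_le_add_of_tendsto (fun k l => ?_) (fun k l => ?_) hL1
  · exact add_nonneg (by positivity) (integral_nonneg fun _ => abs_nonneg _)
  · have hsup : ‖f k - f l‖ ≤ 2 := (norm_sub_le _ _).trans (by linarith [hf1 k, hf1 l])
    calc distN μ n (f k) (f l) ≤ 1 / (n : ℝ) * 2 + ∫ x, |f k x - f l x| ∂μ := by
          unfold distN; gcongr
      _ = 2 / n + ∫ x, |f k x - f l x| ∂μ := by ring

theorem ca_le_and_cc_le_of_coinMeasure_general
    (μ : Measure CantorDelta) (hμ : IsCoinProductMeasure μ) (n : ℕ) :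
    (∀ f : ℕ → C(CantorDelta, ℝ), (∀ k, f k ∈ closedBall (0 : C(CantorDelta, ℝ)) 1) →
      (∀ φ : StrongDual ℝ C(CantorDelta, ℝ), CauchySeq fun k => φ (f k)) →
      caSeqD (distN μ n) f ≤ 2 / n) ∧
    sSup {r | ∃ f : ℕ → C(CantorDelta, ℝ),
        (∀ k, f k ∈ closedBall (0 : C(CantorDelta, ℝ)) 1) ∧
        (∀ φ : StrongDual ℝ C(CantorDelta, ℝ), CauchySeq fun k => φ (f k)) ∧
        r = caSeqD (distN μ n) f} ≤ 2 / n := by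
  have := hμ.1
  have hca := fun f hf hw => caSeqD_distN_le μ n (f := f) hf hw
  refine ⟨hca, Real.sSup_le ?_ (by positivity)⟩
  rintro r ⟨f, hf, hw, rfl⟩
  exact hca f hf hw

/-- On the Cantor space `Δ = {-1,1}^ℕ` with the coin-tossing product measure `μ`,
every weakly Cauchy sequence in the sup-norm unit ball of `C(Δ)` satisfies
`ca((f_k)) ≤ 2/n` in the norm `‖·‖_n`; consequently, the identity operator
`Q_n : C(Δ) → Y_n = (C(Δ), ‖·‖_n)` satisfies `cc(Q_n) ≤ 2/n`. -/
theorem ca_le_and_cc_le_of_coinMeasure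
    (μ : Measure CantorDelta) (hμ : IsCoinProductMeasure μ) (n : ℕ) (hn : 0 < n) :
    (∀ f : ℕ → C(CantorDelta, ℝ), (∀ k, f k ∈ closedBall (0 : C(CantorDelta, ℝ)) 1) →
      (∀ φ : StrongDual ℝ C(CantorDelta, ℝ), CauchySeq fun k => φ (f k)) →
      caSeqD (distN μ n) f ≤ 2 / n) ∧
    sSup {r | ∃ f : ℕ → C(CantorDelta, ℝ),
        (∀ k, f k ∈ closedBall (0 : C(CantorDelta, ℝ)) 1) ∧
        (∀ φ : StrongDual ℝ C(CantorDelta, ℝ), CauchySeq fun k => φ (f k)) ∧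
        r = caSeqD (distN μ n) f} ≤ 2 / n :=
  ca_le_and_cc_le_of_coinMeasure_general μ hμ n
end
end

section
/- Let Δ = {−1,1}^ℕ be the Cantor space with the product probability measure μ (the countable power of (δ₁ + δ₋₁)/2). For n ∈ ℕ, let Y_n = (C(Δ), ‖·‖_n) where ‖f‖_n = (1/n)‖f‖_∞ + ∫_Δ |f| dμ, and let Q_n : C(Δ) → Y_n be the identity operator from C(Δ) with the sup norm. Then ω(Q_n(B_{C(Δ)})) ≥ 1/2, where ω is computed in Y_n and B_{C(Δ)} is the sup-norm closed unit ball. -/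
open Filter Metric Set MeasureTheory NormedSpace
open scoped Topology

noncomputable section

namespace CantorAux

lemma coe_cases (a : ({-1,1} : Set ℝ)) : (a : ℝ) = -1 ∨ (a : ℝ) = 1 := a.2

lemma abs_coe (a : ({-1,1} : Set ℝ)) : |(a : ℝ)| = 1 := by
  rcases coe_cases a with h | h <;> rw [h] <;> norm_num

lemma sq_coe (a : ({-1,1} : Set ℝ)) : (a : ℝ) * a = 1 := by
  rcases coe_cases a with h | h <;> rw [h] <;> norm_num

def negC (a : ({-1,1} : Set ℝ)) : ({-1,1} : Set ℝ) :=
  ⟨-a, by rcases coe_cases a with h | h <;> rw [h] <;> simp⟩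

@[simp] lemma coe_negC (a : ({-1,1} : Set ℝ)) : (negC a : ℝ) = -a := rfl

@[simp] lemma negC_negC (a : ({-1,1} : Set ℝ)) : negC (negC a) = a := by
  apply Subtype.ext; simp

def flipC (k : ℕ) (x : CantorDelta) : CantorDelta := fun i => if i = k then negC (x i) else x i

lemma flipC_apply_ne (k : ℕ) (x : CantorDelta) {i : ℕ} (h : i ≠ k) : flipC k x i = x i :=
  if_neg h

@[simp] lemma flipC_apply_self (k : ℕ) (x : CantorDelta) : flipC k x k = negC (x k) := if_pos rfl

lemma flipC_invol (k : ℕ) (x : CantorDelta) : flipC k (flipC k x) = x := by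
  funext i
  by_cases h : i = k
  · subst h; simp [flipC]
  · simp [flipC, if_neg h]

instance : DiscreteTopology ({-1,1} : Set ℝ) := inferInstance

lemma continuous_flipC (k : ℕ) : Continuous (flipC k) := by
  apply continuous_pi
  intro i
  show Continuous fun x : CantorDelta => if i = k then negC (x i) else x i
  by_cases h : i = k
  · simp only [if_pos h]
    exact (continuous_of_discreteTopology (f := negC)).comp (continuous_apply i)
  · simp only [if_neg h]
    exact continuous_apply i

-- cylinders
def cyl (s : Finset ℕ) (v : ℕ → ({-1,1} : Set ℝ)) : Set CantorDelta := {x | ∀ i ∈ s, x i = v i}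

def cylSets : Set (Set CantorDelta) := {A | ∃ s v, A = cyl s v}

lemma measurableSet_cyl (s : Finset ℕ) (v : ℕ → ({-1,1} : Set ℝ)) : MeasurableSet (cyl s v) := by
  have : cyl s v = ⋂ i ∈ s, (fun x : CantorDelta => x i) ⁻¹' {v i} := by
    ext x; simp [cyl]
  rw [this]
  exact MeasurableSet.biInter s.countable_toSet
    (fun i _ => (measurable_pi_apply i) (measurableSet_singleton _))

lemma isPiSystem_cylSets : IsPiSystem cylSets := by
  rintro A ⟨s, v, rfl⟩ B ⟨t, w, rfl⟩ hne
  obtain ⟨x₀, hx₀⟩ := hne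
  refine ⟨s ∪ t, fun i => if i ∈ s then v i else w i, ?_⟩
  have hsv : ∀ i ∈ s, x₀ i = v i := hx₀.1
  have htw : ∀ i ∈ t, x₀ i = w i := hx₀.2
  ext x
  simp only [cyl, Set.mem_inter_iff, Set.mem_setOf_eq, Finset.mem_union]
  constructor
  · rintro ⟨h1, h2⟩ i hi
    by_cases hs : i ∈ s
    · rw [if_pos hs]; exact h1 i hs
    · rw [if_neg hs]; exact h2 i (hi.resolve_left hs)
  · intro h
    constructor
    · intro i hi
      have := h i (Or.inl hi); rwa [if_pos hi] at this
    · intro i hi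
      by_cases hs : i ∈ s
      · have := h i (Or.inl hs); rw [if_pos hs] at this
        rw [this, ← hsv i hs, htw i hi]
      · have := h i (Or.inr hi); rwa [if_neg hs] at this

lemma generateFrom_cylSets :
    MeasurableSpace.generateFrom cylSets = (inferInstance : MeasurableSpace CantorDelta) := by
  apply le_antisymm
  · exact MeasurableSpace.generateFrom_le (by rintro A ⟨s, v, rfl⟩; exact measurableSet_cyl s v)
  · rw [show (inferInstance : MeasurableSpace CantorDelta) = MeasurableSpace.pi from rfl,
      MeasurableSpace.pi]
    refine iSup_le fun i => ?_
    intro A hA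
    obtain ⟨B, -, rfl⟩ := hA
    have : (fun x : CantorDelta => x i) ⁻¹' B = ⋃ a ∈ B, cyl {i} (fun _ => a) := by
      ext x
      simp only [Set.mem_preimage, Set.mem_iUnion, exists_prop, cyl, Set.mem_setOf_eq]
      constructor
      · intro hx
        exact ⟨x i, hx, by intro j hj; rw [Finset.mem_singleton] at hj; rw [hj]⟩
      · rintro ⟨a, ha, hx⟩
        have h2 := hx i (Finset.mem_singleton_self i)
        rw [h2]; exact ha
    rw [this]
    have hcount : B.Countable := Set.to_countable B
    exact MeasurableSet.biUnion hcount fun a _ =>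
      MeasurableSpace.measurableSet_generateFrom ⟨{i}, fun _ => a, rfl⟩

lemma measurePreserving_flipC (μ : Measure CantorDelta) (hμ : IsCoinProductMeasure μ) (k : ℕ) :
    MeasurePreserving (flipC k) μ μ := by
  have hmeas : Measurable (flipC k) := (continuous_flipC k).measurable
  refine ⟨hmeas, ?_⟩
  haveI := hμ.1
  haveI : IsProbabilityMeasure (μ.map (flipC k)) :=
    Measure.isProbabilityMeasure_map hmeas.aemeasurable
  refine ext_of_generate_finite cylSets generateFrom_cylSets.symm isPiSystem_cylSets ?_ (by simp)
  rintro A ⟨s, v, rfl⟩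
  rw [Measure.map_apply hmeas (measurableSet_cyl s v)]
  have hpre : flipC k ⁻¹' cyl s v = cyl s (fun i => if i = k then negC (v i) else v i) := by
    ext x
    simp only [cyl, Set.mem_preimage, Set.mem_setOf_eq, flipC]
    refine forall₂_congr fun i hi => ?_
    by_cases h : i = k
    · rw [if_pos h, if_pos h]
      constructor
      · intro h'; rw [← h', negC_negC]
      · intro h'; rw [h', negC_negC]
    · rw [if_neg h, if_neg h]
  rw [hpre]
  have h1 := hμ.2 s (fun i => if i = k then negC (v i) else v i)
  have h2 := hμ.2 s v
  rw [show {x : CantorDelta | ∀ i ∈ s, x i = v i} = cyl s v from rfl] at h2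
  rw [show {x : CantorDelta | ∀ i ∈ s, x i = (fun i => if i = k then negC (v i) else v i) i} =
    cyl s (fun i => if i = k then negC (v i) else v i) from rfl] at h1
  rw [h1, h2]

def flipE (k : ℕ) : CantorDelta ≃ᵐ CantorDelta where
  toFun := flipC k
  invFun := flipC k
  left_inv := flipC_invol k
  right_inv := flipC_invol k
  measurable_toFun := (continuous_flipC k).measurable
  measurable_invFun := (continuous_flipC k).measurable

end CantorAux

namespace CantorAux

lemma integrable_cont (μ : Measure CantorDelta) [IsFiniteMeasure μ] {g : CantorDelta → ℝ}
    (hg : Continuous g) : Integrable g μ := by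
  have := hg.continuousOn.integrableOn_compact (μ := μ) (isCompact_univ)
  simpa [IntegrableOn] using this

/-- Rademacher function as a continuous map. -/
def radC (k : ℕ) : C(CantorDelta, ℝ) :=
  ⟨fun x => (x k : ℝ), continuous_subtype_val.comp (continuous_apply k)⟩

@[simp] lemma radC_apply (k : ℕ) (x : CantorDelta) : radC k x = (x k : ℝ) := rfl

lemma exists_osc (g : C(CantorDelta, ℝ)) {ε : ℝ} (hε : 0 < ε) :
    ∃ m : ℕ, ∀ x y : CantorDelta, (∀ i < m, x i = y i) → |g x - g y| ≤ ε := by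
  by_contra h
  push_neg at h
  choose x y hxy hgt using h
  obtain ⟨a, -, φ, hφ, hx⟩ := isCompact_univ.tendsto_subseq (x := x) (fun m => mem_univ _)
  have hy : Tendsto (y ∘ φ) atTop (𝓝 a) := by
    rw [tendsto_pi_nhds] at hx ⊢
    intro i
    apply (hx i).congr'
    filter_upwards [eventually_ge_atTop (i + 1)] with j hj
    exact hxy (φ j) i (lt_of_lt_of_le (Nat.lt_succ_of_le le_rfl) (hj.trans (hφ.le_apply)))
  have h1 : Tendsto (fun j => |g (x (φ j)) - g (y (φ j))|) atTop (𝓝 |g a - g a|) :=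
    (((g.continuous.tendsto a).comp hx).sub ((g.continuous.tendsto a).comp hy)).abs
  rw [sub_self, abs_zero] at h1
  have h2 : ∀ᶠ j in atTop, |g (x (φ j)) - g (y (φ j))| < ε :=
    h1.eventually (eventually_lt_nhds hε)  -- maybe wrong name
  obtain ⟨j, hj⟩ := h2.exists
  exact absurd hj (not_lt.mpr (hgt (φ j)).le)

lemma tendsto_integral_rad (μ : Measure CantorDelta) (hμ : IsCoinProductMeasure μ)
    (g : C(CantorDelta, ℝ)) :
    Tendsto (fun k => ∫ x, g x * (x k : ℝ) ∂μ) atTop (𝓝 0) := by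
  haveI := hμ.1
  rw [Metric.tendsto_atTop]
  intro ε hε
  obtain ⟨m, hm⟩ := exists_osc g hε
  refine ⟨m, fun k hk => ?_⟩
  set I := ∫ x, g x * (x k : ℝ) ∂μ with hI
  have hint : Integrable (fun x : CantorDelta => g x * (x k : ℝ)) μ :=
    integrable_cont μ (g.continuous.mul (radC k).continuous)
  have hmap : ∫ x, g (flipC k x) * ((flipC k x) k : ℝ) ∂μ = I := by
    rw [hI]
    exact (measurePreserving_flipC μ hμ k).integral_comp
      (MeasurableEquiv.measurableEmbedding (flipE k)) (fun y => g y * (y k : ℝ))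
  have hflip : ∀ x : CantorDelta, g (flipC k x) * ((flipC k x) k : ℝ)
      = -(g (flipC k x) * (x k : ℝ)) := by
    intro x
    rw [flipC_apply_self, coe_negC]
    ring
  have hneg : ∫ x, g (flipC k x) * (x k : ℝ) ∂μ = -I := by
    have h1 : I = ∫ x, -(g (flipC k x) * (x k : ℝ)) ∂μ := by
      rw [← hmap]; exact integral_congr_ae (Eventually.of_forall fun x => (hflip x))
    rw [integral_neg] at h1
    linarith
  have hint2 : Integrable (fun x : CantorDelta => g (flipC k x) * (x k : ℝ)) μ :=
    integrable_cont μ ((g.continuous.comp (continuous_flipC k)).mul (radC k).continuous)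
  have h2I : I + I = ∫ x, (g x - g (flipC k x)) * (x k : ℝ) ∂μ := by
    have e1 : ∫ x, (g x - g (flipC k x)) * (x k : ℝ) ∂μ
        = ∫ x, (g x * (x k : ℝ) - g (flipC k x) * (x k : ℝ)) ∂μ :=
      integral_congr_ae (Eventually.of_forall fun x => by ring)
    rw [e1, integral_sub hint hint2, hneg, hI]
    ring
  have hbound : ‖∫ x, (g x - g (flipC k x)) * (x k : ℝ) ∂μ‖ ≤ ε := by
    have hb : ∀ᵐ x ∂μ, ‖(g x - g (flipC k x)) * ((x k : ℝ))‖ ≤ ε := by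
      refine Eventually.of_forall fun x => ?_
      have hagree : ∀ i < m, x i = flipC k x i := by
        intro i hi
        exact (flipC_apply_ne k x (by omega)).symm
      have h1 := hm x (flipC k x) hagree
      rw [Real.norm_eq_abs, abs_mul, abs_coe, mul_one]
      exact h1
    have := norm_integral_le_of_norm_le_const (μ := μ) hb
    simpa using this
  rw [Real.dist_eq, sub_zero]
  have habs : |I + I| ≤ ε := by rwa [h2I, ← Real.norm_eq_abs]
  rw [← two_mul, abs_mul, abs_two] at habs
  have := abs_nonneg I
  linarith

-- (a) weak eval continuity
lemma weak_eval_continuous {X : Type*} [NormedAddCommGroup X] [NormedSpace ℝ X] (φ : X →L[ℝ] ℝ) :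
    Continuous fun f : WeakSpace ℝ X => φ ((toWeakSpace ℝ X).symm f) :=
  WeakBilin.eval_continuous _ φ

-- (b) boundedness of weakly compact sets
lemma norm_bound_of_weaklyCompact {X : Type*} [NormedAddCommGroup X] [NormedSpace ℝ X]
    [CompleteSpace X]
    {K : Set X} (hKw : IsCompact (toWeakSpace ℝ X '' K)) : ∃ M, ∀ g ∈ K, ‖g‖ ≤ M := by
  have h : ∀ φ : X →L[ℝ] ℝ, ∃ C, ∀ g : K, ‖(inclusionInDoubleDual ℝ X (g : X)) φ‖ ≤ C := by
    intro φ
    have hc : IsCompact ((fun f : WeakSpace ℝ X => φ ((toWeakSpace ℝ X).symm f)) ''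
        (toWeakSpace ℝ X '' K)) := hKw.image (weak_eval_continuous φ)
    obtain ⟨C, hC⟩ := hc.isBounded.subset_closedBall 0
    refine ⟨C, fun g => ?_⟩
    have : φ ((toWeakSpace ℝ X).symm (toWeakSpace ℝ X (g : X))) ∈ closedBall (0:ℝ) C :=
      hC (mem_image_of_mem _ (mem_image_of_mem _ g.2))
    simpa [Real.norm_eq_abs, Real.dist_eq] using this
  obtain ⟨C', hC'⟩ := banach_steinhaus (g := fun g : K => inclusionInDoubleDual ℝ X (g : X)) h
  refine ⟨C', fun g hg => ?_⟩
  have := hC' ⟨g, hg⟩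
  rwa [show inclusionInDoubleDual ℝ X g = inclusionInDoubleDualLi ℝ (E := X) g from rfl,
    (inclusionInDoubleDualLi ℝ (E := X)).norm_map] at this

lemma exists_weak_subseq {K : Set C(CantorDelta, ℝ)}
    (hKw : IsCompact (toWeakSpace ℝ C(CantorDelta, ℝ) '' K))
    (gs : ℕ → C(CantorDelta, ℝ)) (hgs : ∀ k, gs k ∈ K) :
    ∃ g ∈ K, ∃ φ : ℕ → ℕ, StrictMono φ ∧
      ∀ ψ : C(CantorDelta, ℝ) →L[ℝ] ℝ, Tendsto (fun j => ψ (gs (φ j))) atTop (𝓝 (ψ g)) := by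
  classical
  haveI : Nonempty CantorDelta := ⟨fun _ => ⟨1, by simp⟩⟩
  set u : ℕ → CantorDelta := TopologicalSpace.denseSeq CantorDelta
  have hu : DenseRange u := TopologicalSpace.denseRange_denseSeq CantorDelta
  set T : WeakSpace ℝ C(CantorDelta, ℝ) → (ℕ → ℝ) := fun f m => (ContinuousMap.evalCLM ℝ (u m)) ((toWeakSpace ℝ C(CantorDelta, ℝ)).symm f)
    with hTdef
  have hTcont : Continuous T := by
    apply continuous_pi
    intro m
    exact weak_eval_continuous (ContinuousMap.evalCLM ℝ (u m))
  have hTinj : Function.Injective T := by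
    intro f f' hff'
    have h1 : ∀ m, ((toWeakSpace ℝ C(CantorDelta, ℝ)).symm f) (u m) = ((toWeakSpace ℝ C(CantorDelta, ℝ)).symm f') (u m) :=
      fun m => congrFun hff' m
    have h2 : (toWeakSpace ℝ C(CantorDelta, ℝ)).symm f = (toWeakSpace ℝ C(CantorDelta, ℝ)).symm f' := by
      apply ContinuousMap.ext
      have := Continuous.ext_on hu ((toWeakSpace ℝ C(CantorDelta, ℝ)).symm f).continuous
        ((toWeakSpace ℝ C(CantorDelta, ℝ)).symm f').continuous ?_
      · exact fun x => congrFun this x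
      · rintro z ⟨m, rfl⟩
        exact h1 m
    exact (toWeakSpace ℝ C(CantorDelta, ℝ)).symm.injective h2
  -- K' as a compact topological space, embedded in ℝ^ℕ, hence first countable
  haveI hCS : CompactSpace (toWeakSpace ℝ C(CantorDelta, ℝ) '' K) := isCompact_iff_compactSpace.mp hKw
  have he : Topology.IsEmbedding (fun p : (toWeakSpace ℝ C(CantorDelta, ℝ) '' K) => T p.1) :=
    (Continuous.isClosedEmbedding (hTcont.comp continuous_subtype_val)
      (fun p q hpq => Subtype.ext (hTinj hpq))).toIsEmbedding
  haveI : FirstCountableTopology (toWeakSpace ℝ C(CantorDelta, ℝ) '' K) := he.firstCountableTopology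
  set sq : ℕ → (toWeakSpace ℝ C(CantorDelta, ℝ) '' K) := fun j => ⟨toWeakSpace ℝ C(CantorDelta, ℝ) (gs j), mem_image_of_mem _ (hgs j)⟩ with hsq
  obtain ⟨a, -, φ, hφ, ha⟩ := isCompact_univ.tendsto_subseq (x := sq) (fun j => mem_univ _)
  obtain ⟨g, hgK, hga⟩ := a.2
  refine ⟨g, hgK, φ, hφ, fun ψ => ?_⟩
  have hval : Tendsto (fun j => ((sq (φ j)) : WeakSpace ℝ C(CantorDelta, ℝ))) atTop (𝓝 (a : WeakSpace ℝ C(CantorDelta, ℝ))) :=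
    (continuous_subtype_val.tendsto a).comp ha
  have := ((weak_eval_continuous (X := C(CantorDelta, ℝ)) ψ).tendsto (a : WeakSpace ℝ C(CantorDelta, ℝ))).comp hval
  have hsimp : ∀ f : C(CantorDelta, ℝ), ψ ((toWeakSpace ℝ C(CantorDelta, ℝ)).symm (toWeakSpace ℝ C(CantorDelta, ℝ) f)) = ψ f := by
    intro f; rw [LinearEquiv.symm_apply_apply]
  simp only [Function.comp_def] at this
  have h2 : ψ ((toWeakSpace ℝ C(CantorDelta, ℝ)).symm (a : WeakSpace ℝ C(CantorDelta, ℝ))) = ψ g := by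
    rw [← hga, LinearEquiv.symm_apply_apply]
  rw [← h2]
  have heq : (fun j => ψ (gs (φ j)))
      = fun j => ψ ((toWeakSpace ℝ C(CantorDelta, ℝ)).symm ((sq (φ j)) : WeakSpace ℝ C(CantorDelta, ℝ))) := by
    funext j; exact (hsimp (gs (φ j))).symm
  rw [heq]
  exact this

lemma exists_small_correlation (μ : Measure CantorDelta) (hμ : IsCoinProductMeasure μ)
    {K : Set C(CantorDelta, ℝ)}
    (hKw : IsCompact (toWeakSpace ℝ C(CantorDelta, ℝ) '' K)) :
    ∃ k : ℕ, ∀ g ∈ K, ∫ x, g x * (x k : ℝ) ∂μ ≤ 1 / 2 := by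
  haveI := hμ.1
  by_contra hcon
  push_neg at hcon
  choose gs hgs hbig using hcon
  obtain ⟨M, hM⟩ := norm_bound_of_weaklyCompact hKw
  obtain ⟨g, hgK, φ, hφ, hconv⟩ := exists_weak_subseq hKw gs hgs
  have hpt : ∀ x : CantorDelta, Tendsto (fun j => gs (φ j) x) atTop (𝓝 (g x)) := fun x =>
    hconv (ContinuousMap.evalCLM ℝ x)
  have hT1 : Tendsto (fun j => ∫ x, |gs (φ j) x - g x| ∂μ) atTop (𝓝 0) := by
    have h0 : (0:ℝ) = ∫ (_ : CantorDelta), (0:ℝ) ∂μ := by simp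
    rw [h0]
    apply tendsto_integral_of_dominated_convergence (bound := fun _ => M + ‖g‖)
    · intro j
      exact (((gs (φ j)).continuous.sub g.continuous).abs).aestronglyMeasurable
    · exact integrable_const _
    · intro j
      refine Eventually.of_forall fun x => ?_
      have h1 : |gs (φ j) x| ≤ M := by
        have := ContinuousMap.norm_coe_le_norm (gs (φ j)) x
        rw [Real.norm_eq_abs] at this
        exact this.trans (hM _ (hgs (φ j)))
      have h2 : |g x| ≤ ‖g‖ := by
        have := ContinuousMap.norm_coe_le_norm g x
        rwa [Real.norm_eq_abs] at this
      rw [Real.norm_eq_abs, abs_abs]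
      calc |gs (φ j) x - g x| ≤ |gs (φ j) x| + |g x| := abs_sub _ _
        _ ≤ M + ‖g‖ := add_le_add h1 h2
    · refine Eventually.of_forall fun x => ?_
      have := ((hpt x).sub (tendsto_const_nhds (x := g x))).abs
      simpa using this
  have hT2 : Tendsto (fun j => ∫ x, g x * (x (φ j) : ℝ) ∂μ) atTop (𝓝 0) :=
    (tendsto_integral_rad μ hμ g).comp hφ.tendsto_atTop
  have key : ∀ j, (1:ℝ)/2 ≤ ∫ x, |gs (φ j) x - g x| ∂μ + |∫ x, g x * (x (φ j) : ℝ) ∂μ| := by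
    intro j
    set k := φ j with hkdef
    have hi1 : Integrable (fun x : CantorDelta => (gs (φ j) x - g x) * (x k : ℝ)) μ :=
      integrable_cont μ (((gs (φ j)).continuous.sub g.continuous).mul (radC k).continuous)
    have hi2 : Integrable (fun x : CantorDelta => g x * (x k : ℝ)) μ :=
      integrable_cont μ (g.continuous.mul (radC k).continuous)
    have hiabs : Integrable (fun x : CantorDelta => |gs (φ j) x - g x|) μ :=
      integrable_cont μ (((gs (φ j)).continuous.sub g.continuous).abs)
    have e : ∫ x, gs (φ j) x * (x k : ℝ) ∂μ
        = ∫ x, (gs (φ j) x - g x) * (x k : ℝ) ∂μ + ∫ x, g x * (x k : ℝ) ∂μ := by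
      rw [← integral_add hi1 hi2]
      exact integral_congr_ae (Eventually.of_forall fun x => by ring)
    have b1 : ∫ x, (gs (φ j) x - g x) * (x k : ℝ) ∂μ ≤ ∫ x, |gs (φ j) x - g x| ∂μ := by
      apply integral_mono hi1 hiabs
      intro x
      calc (gs (φ j) x - g x) * (x k : ℝ) ≤ |(gs (φ j) x - g x) * (x k : ℝ)| := le_abs_self _
        _ = |gs (φ j) x - g x| := by rw [abs_mul, abs_coe, mul_one]
    have b2 : ∫ x, g x * (x k : ℝ) ∂μ ≤ |∫ x, g x * (x k : ℝ) ∂μ| := le_abs_self _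
    have := hbig k
    rw [e] at this
    linarith
  have hsum : Tendsto (fun j => ∫ x, |gs (φ j) x - g x| ∂μ + |∫ x, g x * (x (φ j) : ℝ) ∂μ|)
      atTop (𝓝 0) := by
    have := hT1.add hT2.abs
    simpa using this
  have := (hsum.eventually (eventually_lt_nhds (by norm_num : (0:ℝ) < 1/2))).exists
  obtain ⟨j, hj⟩ := this
  exact absurd hj (not_lt.mpr (key j))

end CantorAux

open CantorAux

/-- On the Cantor space `Δ = {-1,1}^ℕ` with the coin-tossing product measure `μ`,
the image under the identity operator `Q_n : C(Δ) → Y_n = (C(Δ), ‖·‖_n)` of the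
sup-norm closed unit ball has de Blasi measure of weak non-compactness (computed
in `Y_n`) at least `1/2`. -/
theorem omega_identity_into_Yn_ge_half
    (μ : Measure CantorDelta) (hμ : IsCoinProductMeasure μ) (n : ℕ) (hn : 0 < n) :
    (1 : ℝ) / 2 ≤
      sInf {r | ∃ K : Set C(CantorDelta, ℝ), K.Nonempty ∧ IsWeaklyCompact ℝ K ∧
        r = hdD (distN μ n) (closedBall (0 : C(CantorDelta, ℝ)) 1) K} := by
  classical
  haveI := hμ.1
  apply le_csInf
  · refine ⟨hdD (distN μ n) (closedBall (0 : C(CantorDelta, ℝ)) 1) {0}, {0},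
      singleton_nonempty 0, ?_, rfl⟩
    unfold IsWeaklyCompact
    rw [Set.image_singleton]
    exact isCompact_singleton
  rintro r ⟨K, hKne, hKw, rfl⟩
  obtain ⟨k, hk⟩ := exists_small_correlation μ hμ hKw
  haveI hKne' : Nonempty ↥K := hKne.to_subtype
  have hdist_nonneg : ∀ (f g : C(CantorDelta, ℝ)), 0 ≤ distN μ n f g := by
    intro f g
    unfold distN
    have h1 : 0 ≤ (1 / (n : ℝ)) * ‖f - g‖ := by positivity
    have h2 : 0 ≤ ∫ x, |f x - g x| ∂μ := integral_nonneg fun x => abs_nonneg _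
    linarith
  have hBddB : ∀ f : C(CantorDelta, ℝ), BddBelow (range fun b : ↥K => distN μ n f b) := by
    intro f
    exact ⟨0, by rintro y ⟨b, rfl⟩; exact hdist_nonneg f b⟩
  obtain ⟨b₀, hb₀⟩ := hKne
  have hintsub : ∀ (f g : C(CantorDelta, ℝ)),
      Integrable (fun x : CantorDelta => |f x - g x|) μ := fun f g =>
    integrable_cont μ ((f.continuous.sub g.continuous).abs)
  have hub : BddAbove (range fun a : ↥(closedBall (0 : C(CantorDelta, ℝ)) 1) =>
      ⨅ b : ↥K, distN μ n a b) := by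
    refine ⟨(1 / (n : ℝ)) * (1 + ‖b₀‖) + (1 + ‖b₀‖), ?_⟩
    rintro y ⟨a, rfl⟩
    have ha : ‖(a : C(CantorDelta, ℝ))‖ ≤ 1 := by
      have := a.2
      rwa [mem_closedBall_zero_iff] at this
    have h1 : distN μ n a b₀ ≤ (1 / (n : ℝ)) * (1 + ‖b₀‖) + (1 + ‖b₀‖) := by
      unfold distN
      have hna : ‖(a : C(CantorDelta, ℝ)) - b₀‖ ≤ 1 + ‖b₀‖ :=
        (norm_sub_le _ _).trans (by linarith)
      have hpt : ∀ x, |(a : C(CantorDelta, ℝ)) x - b₀ x| ≤ 1 + ‖b₀‖ := by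
        intro x
        calc |(a : C(CantorDelta, ℝ)) x - b₀ x|
            = ‖((a : C(CantorDelta, ℝ)) - b₀) x‖ := by
              rw [ContinuousMap.sub_apply, Real.norm_eq_abs]
          _ ≤ ‖(a : C(CantorDelta, ℝ)) - b₀‖ := ContinuousMap.norm_coe_le_norm _ x
          _ ≤ 1 + ‖b₀‖ := hna
      have h2 : ∫ x, |(a : C(CantorDelta, ℝ)) x - b₀ x| ∂μ ≤ 1 + ‖b₀‖ := by
        calc ∫ x, |(a : C(CantorDelta, ℝ)) x - b₀ x| ∂μ
            ≤ ∫ _, (1 + ‖b₀‖) ∂μ := integral_mono (hintsub _ _) (integrable_const _) hpt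
          _ = 1 + ‖b₀‖ := by simp
      have hmul : (1 / (n : ℝ)) * ‖(a : C(CantorDelta, ℝ)) - b₀‖
          ≤ (1 / (n : ℝ)) * (1 + ‖b₀‖) :=
        mul_le_mul_of_nonneg_left hna (by positivity)
      linarith
    exact (ciInf_le (hBddB a) ⟨b₀, hb₀⟩).trans h1
  have hmem : radC k ∈ closedBall (0 : C(CantorDelta, ℝ)) 1 := by
    rw [mem_closedBall_zero_iff]
    refine (ContinuousMap.norm_le _ zero_le_one).mpr fun x => ?_
    rw [radC_apply, Real.norm_eq_abs, abs_coe]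
  have hstep : ∀ b : ↥K, (1 : ℝ)/2 ≤ distN μ n (radC k) b := by
    intro b
    have hkb := hk b b.2
    have hi1 : Integrable (fun x : CantorDelta =>
        (radC k x - (b : C(CantorDelta, ℝ)) x) * (x k : ℝ)) μ :=
      integrable_cont μ (((radC k).continuous.sub (b : C(CantorDelta, ℝ)).continuous).mul
        (radC k).continuous)
    have hirad : Integrable (fun x : CantorDelta => radC k x * (x k : ℝ)) μ :=
      integrable_cont μ ((radC k).continuous.mul (radC k).continuous)
    have hib : Integrable (fun x : CantorDelta => (b : C(CantorDelta, ℝ)) x * (x k : ℝ)) μ :=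
      integrable_cont μ ((b : C(CantorDelta, ℝ)).continuous.mul (radC k).continuous)
    have hsq : ∫ x, radC k x * (x k : ℝ) ∂μ = 1 := by
      have h1 : (fun x : CantorDelta => radC k x * (x k : ℝ)) = fun _ => (1:ℝ) :=
        funext fun x => sq_coe (x k)
      rw [h1]
      simp
    have h3 : ∫ x, (radC k x - (b : C(CantorDelta, ℝ)) x) * (x k : ℝ) ∂μ
        = 1 - ∫ x, (b : C(CantorDelta, ℝ)) x * (x k : ℝ) ∂μ := by
      rw [show (fun x : CantorDelta => (radC k x - (b : C(CantorDelta, ℝ)) x) * (x k : ℝ))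
        = fun x => radC k x * (x k : ℝ) - (b : C(CantorDelta, ℝ)) x * (x k : ℝ) from
        funext fun x => by ring, integral_sub hirad hib, hsq]
    have h4 : ∫ x, (radC k x - (b : C(CantorDelta, ℝ)) x) * (x k : ℝ) ∂μ
        ≤ ∫ x, |radC k x - (b : C(CantorDelta, ℝ)) x| ∂μ := by
      apply integral_mono hi1 (hintsub _ _)
      intro x
      calc (radC k x - (b : C(CantorDelta, ℝ)) x) * (x k : ℝ)
          ≤ |(radC k x - (b : C(CantorDelta, ℝ)) x) * (x k : ℝ)| := le_abs_self _
        _ = |radC k x - (b : C(CantorDelta, ℝ)) x| := by rw [abs_mul, abs_coe, mul_one]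
    have h5 : (1:ℝ)/2 ≤ ∫ x, |radC k x - (b : C(CantorDelta, ℝ)) x| ∂μ := by
      rw [h3] at h4
      linarith
    have h6 : 0 ≤ (1 / (n : ℝ)) * ‖radC k - (b : C(CantorDelta, ℝ))‖ := by positivity
    unfold distN
    linarith
  calc (1:ℝ)/2 ≤ ⨅ b : ↥K, distN μ n (radC k) b := le_ciInf hstep
    _ ≤ hdD (distN μ n) (closedBall (0 : C(CantorDelta, ℝ)) 1) K :=
      le_ciSup hub (⟨radC k, hmem⟩ : ↥(closedBall (0 : C(CantorDelta, ℝ)) 1))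
end
end
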